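/- Let p be a probability measure on a finite set S, k* > 1, c > 0, and V : S → ℝ. Define f(α) = α - c·⟨p, (α - V)₊^{k*}⟩^{1/k*} for α ∈ ℝ. Then f(α) = α for all α ≤ ess inf_p V, and if α* maximizes f over ℝ with α* > ess inf_p V, then c = ⟨p, (α* - V)₊^{k*}⟩^{1 - 1/k*} / ⟨p, (α* - V)₊^{k*-1}⟩, and the measure p*(s) = p(s)(α* - V(s))₊^{k*-1} / ⟨p, (α* - V)₊^{k*-1}⟩ satisfies ⟨p*, V⟩ = f(α*). -/

import Mathlib

open Real Filter

lemma aux_hasDerivAt_maxpow (k : ℝ) (hk : 1 < k) (y : ℝ) :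
    HasDerivAt (fun x : ℝ => max x 0 ^ k) (k * max y 0 ^ (k - 1)) y := by
  have hk0 : k ≠ 0 := by positivity
  have hk1 : k - 1 ≠ 0 := sub_ne_zero.2 hk.ne'
  rcases lt_trichotomy y 0 with hy | rfl | hy
  · have h0 : (fun x : ℝ => max x 0 ^ k) =ᶠ[nhds y] fun _ => (0:ℝ) ^ k := by
      filter_upwards [isOpen_Iio.mem_nhds hy] with x hx
      rw [max_eq_right (le_of_lt hx)]
    have : HasDerivAt (fun _ : ℝ => (0:ℝ) ^ k) 0 y := hasDerivAt_const y _
    have h := this.congr_of_eventuallyEq h0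
    rw [max_eq_right hy.le, Real.zero_rpow hk1, mul_zero]
    exact h
  · have h0 : HasDerivAt (fun x : ℝ => max x 0 ^ k) 0 0 := by
      rw [hasDerivAt_iff_isLittleO]
      simp only [sub_zero, smul_zero, max_self, Real.zero_rpow hk0]
      rw [Asymptotics.isLittleO_iff]
      intro ε hε
      have hδ : (0:ℝ) < min (ε ^ (1/(k-1))) 1 := by
        apply lt_min _ one_pos
        exact Real.rpow_pos_of_pos hε _
      filter_upwards [Metric.ball_mem_nhds (0:ℝ) hδ] with x hx
      simp only [Metric.mem_ball, Real.dist_eq, sub_zero] at hx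
      have hm0 : (0:ℝ) ≤ max x 0 := le_max_right _ _
      have hmx : max x 0 ≤ |x| := max_le (le_abs_self x) (abs_nonneg x)
      have h1 : ‖max x 0 ^ k‖ = max x 0 ^ (k-1) * max x 0 := by
        rw [Real.norm_eq_abs, abs_of_nonneg (Real.rpow_nonneg hm0 _)]
        rcases eq_or_lt_of_le hm0 with h | h
        · rw [← h, Real.zero_rpow hk0, Real.zero_rpow hk1, mul_zero]
        · rw [← Real.rpow_add_one (ne_of_gt h), sub_add_cancel]
      rw [h1]
      have h2 : max x 0 ^ (k-1) ≤ ε := by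
        calc max x 0 ^ (k-1) ≤ (ε ^ (1/(k-1))) ^ (k-1) := by
              apply Real.rpow_le_rpow hm0 _ (by linarith)
              exact hmx.trans (le_of_lt (hx.trans_le (min_le_left _ _)))
          _ = ε := by
              rw [← Real.rpow_mul (le_of_lt hε), one_div_mul_cancel hk1, Real.rpow_one]
      calc max x 0 ^ (k-1) * max x 0 ≤ ε * |x| :=
            mul_le_mul h2 hmx hm0 (le_of_lt hε)
        _ = ε * ‖x‖ := by rw [Real.norm_eq_abs]
    convert h0 using 1
    rw [max_self, Real.zero_rpow hk1, mul_zero]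
  · have h := Real.hasDerivAt_rpow_const (p := k) (x := y) (Or.inl (ne_of_gt hy))
    have h0 : (fun x : ℝ => max x 0 ^ k) =ᶠ[nhds y] fun x => x ^ k := by
      filter_upwards [isOpen_Ioi.mem_nhds hy] with x hx
      rw [max_eq_left (le_of_lt hx)]
    have h2 := h.congr_of_eventuallyEq h0
    rw [max_eq_left hy.le]
    exact h2

/-- First-order characterization of the optimizer in the `f_k`-divergence dual
functional `f(α) = α - c·⟨p, (α-V)₊^{k*}⟩^{1/k*}`: `f(α) = α` for
`α ≤ ess inf_p V`, and at an interior maximizer `α*` the constant `c` and the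
worst-case measure `p*` satisfy the stated identities. -/
theorem stmt_12 {S : Type*} [Fintype S] (p V : S → ℝ) (kstar c : ℝ)
    (hp0 : ∀ s, 0 ≤ p s) (hp1 : ∑ s, p s = 1)
    (hk : 1 < kstar) (hc : 0 < c)
    (f : ℝ → ℝ)
    (hf : f = fun α => α - c * (∑ s, p s * (max (α - V s) 0) ^ kstar) ^ (1 / kstar)) :
    (∀ α : ℝ, α ≤ sInf (V '' {s | 0 < p s}) → f α = α) ∧
    (∀ αstar : ℝ, (∀ α : ℝ, f α ≤ f αstar) → sInf (V '' {s | 0 < p s}) < αstar →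
      c = (∑ s, p s * (max (αstar - V s) 0) ^ kstar) ^ (1 - 1 / kstar) /
            (∑ s, p s * (max (αstar - V s) 0) ^ (kstar - 1)) ∧
      (∑ s, p s * (max (αstar - V s) 0) ^ (kstar - 1) /
          (∑ s', p s' * (max (αstar - V s') 0) ^ (kstar - 1)) * V s) = f αstar) := by
  have hk0 : kstar ≠ 0 := by positivity
  have hk1 : kstar - 1 ≠ 0 := sub_ne_zero.2 hk.ne'
  -- the essential infimum is attained
  have hne : ({s | 0 < p s}).Nonempty := by
    by_contra h
    rw [Set.not_nonempty_iff_eq_empty] at h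
    have : ∑ s, p s = 0 := by
      apply Finset.sum_eq_zero
      intro s _
      by_contra hs
      have : s ∈ ({s | 0 < p s} : Set S) := lt_of_le_of_ne (hp0 s) (Ne.symm hs)
      rw [h] at this; exact this
    rw [hp1] at this; exact one_ne_zero this
  obtain ⟨s₀, hs₀, hVs₀⟩ := Set.Nonempty.csInf_mem (hne.image V) (Set.toFinite _)
  constructor
  · -- Part 1
    intro α hα
    have hg : ∑ s, p s * (max (α - V s) 0) ^ kstar = 0 := by
      apply Finset.sum_eq_zero
      intro s _
      rcases eq_or_lt_of_le (hp0 s) with h | h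
      · rw [← h, zero_mul]
      · have hm : α ≤ V s := le_trans hα (csInf_le (Set.toFinite _).bddBelow ⟨s, h, rfl⟩)
        rw [max_eq_right (by linarith), Real.zero_rpow hk0, mul_zero]
    rw [hf]
    simp only [hg, Real.zero_rpow (by positivity : (1:ℝ)/kstar ≠ 0), mul_zero, sub_zero]
  · -- Part 2
    intro αs hmax hα
    have hVlt : V s₀ < αs := by rw [hVs₀]; exact hα
    have hterm_nonneg : ∀ (e : ℝ) (s : S), 0 ≤ p s * (max (αs - V s) 0) ^ e :=
      fun e s => mul_nonneg (hp0 s) (Real.rpow_nonneg (le_max_right _ _) _)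
    have hmax0 : (0:ℝ) < max (αs - V s₀) 0 := lt_max_of_lt_left (by linarith)
    have hgpos : 0 < ∑ s, p s * (max (αs - V s) 0) ^ kstar :=
      Finset.sum_pos' (fun s _ => hterm_nonneg kstar s)
        ⟨s₀, Finset.mem_univ _, mul_pos hs₀ (Real.rpow_pos_of_pos hmax0 _)⟩
    have hhpos : 0 < ∑ s, p s * (max (αs - V s) 0) ^ (kstar - 1) :=
      Finset.sum_pos' (fun s _ => hterm_nonneg (kstar - 1) s)
        ⟨s₀, Finset.mem_univ _, mul_pos hs₀ (Real.rpow_pos_of_pos hmax0 _)⟩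
    set gA := ∑ s, p s * (max (αs - V s) 0) ^ kstar with hgAdef
    set hA := ∑ s, p s * (max (αs - V s) 0) ^ (kstar - 1) with hhAdef
    set D := gA ^ (1 / kstar - 1) with hDdef
    have hDpos : 0 < D := Real.rpow_pos_of_pos hgpos _
    -- derivative of the inner sum
    have hderivg : HasDerivAt (fun α => ∑ s, p s * (max (α - V s) 0) ^ kstar)
        (∑ s, p s * (kstar * (max (αs - V s) 0) ^ (kstar - 1) * 1)) αs := by
      apply HasDerivAt.fun_sum
      intro s _
      have h1 : HasDerivAt (fun α : ℝ => α - V s) 1 αs := (hasDerivAt_id αs).sub_const (V s)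
      have h2 := (aux_hasDerivAt_maxpow kstar hk (αs - V s)).comp αs h1
      exact h2.const_mul (p s)
    have hG : (∑ s, p s * (kstar * (max (αs - V s) 0) ^ (kstar - 1) * 1)) = kstar * hA := by
      rw [hhAdef, Finset.mul_sum]
      exact Finset.sum_congr rfl (fun s _ => by ring)
    rw [hG] at hderivg
    have hrpow := hderivg.rpow_const (p := 1 / kstar) (Or.inl hgpos.ne')
    have hfderiv : HasDerivAt f (1 - c * (kstar * hA * (1 / kstar) * D)) αs := by
      rw [hf]
      exact (hasDerivAt_id αs).sub (hrpow.const_mul c)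
    have hlocmax : IsLocalMax f αs := Filter.Eventually.of_forall hmax
    have hzero := hlocmax.hasDerivAt_eq_zero hfderiv
    have key : c * hA * D = 1 := by
      have h1 : kstar * hA * (1 / kstar) = hA := by field_simp
      have h2 : c * (kstar * hA * (1 / kstar) * D) = 1 := by linarith
      rw [h1] at h2
      linarith [h2]
    have hD1 : gA ^ (1 - 1 / kstar) * D = 1 := by
      rw [hDdef, ← Real.rpow_add hgpos]
      norm_num
    have hceq : c = gA ^ (1 - 1 / kstar) / hA := by
      rw [eq_div_iff hhpos.ne']
      apply mul_right_cancel₀ hDpos.ne'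
      rw [key, hD1]
    refine ⟨hceq, ?_⟩
    -- the worst-case measure identity
    have hkey : ∀ x : ℝ, max x 0 ^ (kstar - 1) * x = max x 0 ^ kstar := by
      intro x
      rcases le_or_gt x 0 with h | h
      · rw [max_eq_right h, Real.zero_rpow hk1, Real.zero_rpow hk0, zero_mul]
      · rw [max_eq_left h.le, ← Real.rpow_add_one h.ne', sub_add_cancel]
    have hsum : ∑ s, p s * (max (αs - V s) 0) ^ (kstar - 1) * V s = αs * hA - gA := by
      rw [hhAdef, hgAdef, Finset.mul_sum, ← Finset.sum_sub_distrib]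
      apply Finset.sum_congr rfl
      intro s _
      have h := hkey (αs - V s)
      linear_combination (-(p s)) * h
    have hgdivh : c * gA ^ (1 / kstar) = gA / hA := by
      rw [hceq, div_mul_eq_mul_div, ← Real.rpow_add hgpos]
      norm_num
    rw [hf]
    simp only
    rw [← hgAdef, hgdivh]
    calc ∑ s, p s * (max (αs - V s) 0) ^ (kstar - 1) / hA * V s
        = (∑ s, p s * (max (αs - V s) 0) ^ (kstar - 1) * V s) / hA := by
          have he : ∀ s : S, p s * (max (αs - V s) 0) ^ (kstar - 1) / hA * V s
              = p s * (max (αs - V s) 0) ^ (kstar - 1) * V s / hA := fun s => by ring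
          simp only [he]
          rw [← Finset.sum_div]
      _ = (αs * hA - gA) / hA := by rw [hsum]
      _ = αs - gA / hA := by field_simp
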